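/- Let E be a real inner product space, Z ⊆ E nonempty, and H : Z → E a map with ‖H(z)‖ ≤ L₀ for all z ∈ Z (L₀ ≥ 0). Then for every M > 0, H satisfies the (M, 2L₀²/M)-condition on Z: for all z₁, z₂, z₃ ∈ Z, ⟨H(z₁) − H(z₂), z₁ − z₃⟩ ≤ (M/2)·‖z₁ − z₂‖² + (M/2)·‖z₁ − z₃‖² + 2L₀²/M. -/
import Mathlib

open RealInnerProductSpace

theorem bounded_operator_satisfies_inexact_condition
    {E : Type*} [NormedAddCommGroup E] [InnerProductSpace ℝ E]
    (Z : Set E) (hZne : Z.Nonempty)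
    (H : E → E) (L₀ : ℝ) (hL₀ : 0 ≤ L₀)
    (hbound : ∀ z ∈ Z, ‖H z‖ ≤ L₀) :
    ∀ M : ℝ, 0 < M → ∀ z₁ ∈ Z, ∀ z₂ ∈ Z, ∀ z₃ ∈ Z,
      ⟪H z₁ - H z₂, z₁ - z₃⟫
        ≤ M / 2 * ‖z₁ - z₂‖ ^ 2 + M / 2 * ‖z₁ - z₃‖ ^ 2 + 2 * L₀ ^ 2 / M := by
  intro M hM z₁ hz₁ z₂ hz₂ z₃ hz₃
  have h1 : ⟪H z₁ - H z₂, z₁ - z₃⟫ ≤ ‖H z₁ - H z₂‖ * ‖z₁ - z₃‖ :=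
    real_inner_le_norm _ _
  have h2 : ‖H z₁ - H z₂‖ ≤ 2 * L₀ := by
    calc ‖H z₁ - H z₂‖ ≤ ‖H z₁‖ + ‖H z₂‖ := norm_sub_le _ _
    _ ≤ 2 * L₀ := by linarith [hbound z₁ hz₁, hbound z₂ hz₂]
  have ha : (0:ℝ) ≤ ‖z₁ - z₃‖ := norm_nonneg _
  have hb : (0:ℝ) ≤ ‖z₁ - z₂‖ := norm_nonneg _
  have key : ‖H z₁ - H z₂‖ * ‖z₁ - z₃‖ ≤ M / 2 * ‖z₁ - z₃‖ ^ 2 + 2 * L₀ ^ 2 / M := by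
    have hsq : 0 ≤ (M * ‖z₁ - z₃‖ - 2 * L₀) ^ 2 := sq_nonneg _
    have h3 : 2 * L₀ ^ 2 / M * M = 2 * L₀ ^ 2 := div_mul_cancel₀ _ (ne_of_gt hM)
    have h4 : 0 ≤ 2 * L₀ ^ 2 / M := by positivity
    nlinarith [mul_le_mul_of_nonneg_right h2 ha, sq_nonneg (M * ‖z₁ - z₃‖ - 2 * L₀)]
  nlinarith [sq_nonneg ‖z₁ - z₂‖]
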